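/- Let f ∈ L¹(ℝ³×ℝ³) be nonnegative and axially symmetric (f(Ax,Av) = f(x,v) for every rotation A about the x₃-axis) with total mass ∫∫ f dv dx = M. Suppose that for some a = (ā, z) ∈ ℝ²×ℝ, R > 0 and δ > 0 one has ∫_{a+B_R} ∫_{ℝ³} f(x,v) dv dx ≥ δ. Let N := ⌊M/δ⌋ + 1 (so that N δ > M). Then the horizontal component of the shift is bounded: |ā| sin(π/N) ≤ R. (Indeed, if |ā| sin(π/N) > R, then the N balls A_k a + B_R, where A_k is the rotation about the x₃-axis by angle 2πk/N, k = 1,…,N, are pairwise disjoint, and by axial symmetry each carries mass at least δ, contradicting the total mass M.) -/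

import Mathlib

open MeasureTheory Real Filter Topology

noncomputable section

abbrev E3 := EuclideanSpace ℝ (Fin 3)

def e3 (a b c : ℝ) : E3 := (WithLp.equiv 2 (Fin 3 → ℝ)).symm ![a, b, c]

/-- third component of the angular momentum, P(x,v) = x₁v₂ − x₂v₁ -/
def angmom (z : E3 × E3) : ℝ := z.1 0 * z.2 1 - z.1 1 * z.2 0

/-- induced spatial density ρ_f -/
def rho (f : E3 × E3 → ℝ) (x : E3) : ℝ := ∫ v : E3, f (x, v)

/-- kinetic energy -/
def Ekin (f : E3 × E3 → ℝ) : ℝ := (1/2) * ∫ z : E3 × E3, ‖z.2‖^2 * f z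

/-- potential energy -/
def Epot (f : E3 × E3 → ℝ) : ℝ :=
  -(1/2) * ∫ x : E3, ∫ y : E3, rho f x * rho f y / ‖x - y‖

/-- Casimir functional 𝒞 -/
def Casimir (Q : ℝ → ℝ → ℝ) (f : E3 × E3 → ℝ) : ℝ :=
  ∫ z : E3 × E3, Q (f z) (angmom z)

/-- energy-Casimir functional ℋ_C -/
def HC (Q : ℝ → ℝ → ℝ) (f : E3 × E3 → ℝ) : ℝ := Ekin f + Epot f + Casimir Q f

/-- rotation about the x₃-axis by angle θ -/
def rotZ (θ : ℝ) (x : E3) : E3 :=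
  e3 (Real.cos θ * x 0 - Real.sin θ * x 1) (Real.sin θ * x 0 + Real.cos θ * x 1) (x 2)

/-- axial symmetry: invariance under all rotations about the x₃-axis -/
def AxiSym (f : E3 × E3 → ℝ) : Prop :=
  ∀ (θ : ℝ) (z : E3 × E3), f (rotZ θ z.1, rotZ θ z.2) = f z

/-- membership in the constraint set ℱ_M -/
def MemFM (Q : ℝ → ℝ → ℝ) (M : ℝ) (f : E3 × E3 → ℝ) : Prop :=
  Integrable f ∧ (∀ z, 0 ≤ f z) ∧ (∫ z : E3 × E3, f z) = M ∧
    Integrable (fun z : E3 × E3 => ‖z.2‖^2 * f z) ∧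
    Integrable (fun z : E3 × E3 => Q (f z) (angmom z))

/-- membership in the axially symmetric constraint set ℱ_M^S -/
def MemFMS (Q : ℝ → ℝ → ℝ) (M : ℝ) (f : E3 × E3 → ℝ) : Prop :=
  MemFM Q M f ∧ AxiSym f

/-- h_M = inf of ℋ_C over ℱ_M -/
def hInf (Q : ℝ → ℝ → ℝ) (M : ℝ) : ℝ := sInf (HC Q '' {f | MemFM Q M f})

/-- h_M^S = inf of ℋ_C over ℱ_M^S -/
def hInfS (Q : ℝ → ℝ → ℝ) (M : ℝ) : ℝ := sInf (HC Q '' {f | MemFMS Q M f})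

/-- induced gravitational potential U₀ of a state f₀ -/
def U0 (f0 : E3 × E3 → ℝ) (x : E3) : ℝ := -∫ y : E3, rho f0 y / ‖x - y‖

/-- particle energy E(x,v) = ½|v|² + U₀(x) -/
def Eng (f0 : E3 × E3 → ℝ) (z : E3 × E3) : ℝ := (1/2) * ‖z.2‖^2 + U0 f0 z.1

/-- φ(s,P) = (∂_f Q(·,P))⁻¹(s) for s ≥ 0, and 0 for s < 0 -/
def phi (Qf : ℝ → ℝ → ℝ) (s P : ℝ) : ℝ :=
  if 0 ≤ s then Function.invFunOn (fun t => Qf t P) (Set.Ici 0) s else 0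

lemma rotZ_0 (θ : ℝ) (x : E3) : rotZ θ x 0 = Real.cos θ * x 0 - Real.sin θ * x 1 := rfl
lemma rotZ_1 (θ : ℝ) (x : E3) : rotZ θ x 1 = Real.sin θ * x 0 + Real.cos θ * x 1 := rfl
lemma rotZ_2 (θ : ℝ) (x : E3) : rotZ θ x 2 = x 2 := rfl

lemma E3_ext {x y : E3} (h0 : x 0 = y 0) (h1 : x 1 = y 1) (h2 : x 2 = y 2) : x = y := by
  ext i
  fin_cases i
  · exact h0
  · exact h1
  · exact h2

lemma E3_norm (y : E3) : ‖y‖ = Real.sqrt (y 0 ^ 2 + y 1 ^ 2 + y 2 ^ 2) := by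
  rw [EuclideanSpace.norm_eq]
  simp [Fin.sum_univ_three, sq_abs, Real.norm_eq_abs]

def rotL (θ : ℝ) : E3 ≃ₗᵢ[ℝ] E3 where
  toFun := rotZ θ
  invFun := rotZ (-θ)
  map_add' := by
    intro x y; apply E3_ext <;>
      simp only [rotZ_0, rotZ_1, rotZ_2, PiLp.add_apply] <;> ring
  map_smul' := by
    intro c x; apply E3_ext <;>
      simp only [rotZ_0, rotZ_1, rotZ_2, PiLp.smul_apply, smul_eq_mul, RingHom.id_apply] <;> ring
  left_inv := by
    intro x
    refine E3_ext ?_ ?_ ?_ <;>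
      simp only [rotZ_0, rotZ_1, rotZ_2, Real.cos_neg, Real.sin_neg]
    · linear_combination x 0 * Real.sin_sq_add_cos_sq θ
    · linear_combination x 1 * Real.sin_sq_add_cos_sq θ
  right_inv := by
    intro x
    refine E3_ext ?_ ?_ ?_ <;>
      simp only [rotZ_0, rotZ_1, rotZ_2, Real.cos_neg, Real.sin_neg]
    · linear_combination x 0 * Real.sin_sq_add_cos_sq θ
    · linear_combination x 1 * Real.sin_sq_add_cos_sq θ
  norm_map' := by
    intro x
    show ‖rotZ θ x‖ = ‖x‖
    rw [E3_norm, E3_norm, rotZ_0, rotZ_1, rotZ_2]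
    congr 1
    linear_combination (x 0 ^ 2 + x 1 ^ 2) * Real.sin_sq_add_cos_sq θ

lemma rotZ_mp (θ : ℝ) : MeasurePreserving (rotZ θ) volume volume :=
  (rotL θ).measurePreserving

lemma rotZ_emb (θ : ℝ) : MeasurableEmbedding (rotZ θ) :=
  (rotL θ).toHomeomorph.measurableEmbedding

lemma rho_rot {f : E3 × E3 → ℝ} (hsym : AxiSym f) (θ : ℝ) (x : E3) :
    rho f (rotZ θ x) = rho f x := by
  have h1 : ∫ v : E3, f (rotZ θ x, rotZ θ v) = ∫ v : E3, f (rotZ θ x, v) :=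
    (rotZ_mp θ).integral_comp (rotZ_emb θ) (fun v => f (rotZ θ x, v))
  have h2 : (fun v => f (rotZ θ x, rotZ θ v)) = fun v => f (x, v) :=
    funext fun v => hsym θ (x, v)
  simp only [rho]
  rw [← h1, h2]

lemma mass_rot {f : E3 × E3 → ℝ} (hsym : AxiSym f) (θ : ℝ) (a : E3) (R : ℝ) :
    ∫ x in Metric.closedBall (rotZ θ a) R, rho f x
      = ∫ x in Metric.closedBall a R, rho f x := by
  have h1 : Metric.closedBall (rotZ θ a) R = rotZ θ '' Metric.closedBall a R :=
    ((rotL θ).image_closedBall a R).symm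
  rw [h1, (rotZ_mp θ).setIntegral_image_emb (rotZ_emb θ)]
  simp only [rho_rot hsym]

lemma dist_rotZ_sq (α β : ℝ) (x : E3) :
    dist (rotZ α x) (rotZ β x) ^ 2
      = 4 * (x 0 ^ 2 + x 1 ^ 2) * Real.sin ((α - β) / 2) ^ 2 := by
  have hs : Real.sin ((α - β) / 2) ^ 2
      = (1 - (Real.cos α * Real.cos β + Real.sin α * Real.sin β)) / 2 := by
    have h1 := Real.cos_two_mul ((α - β) / 2)
    rw [show 2 * ((α - β) / 2) = α - β by ring, Real.cos_sub] at h1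
    have h2 := Real.sin_sq_add_cos_sq ((α - β) / 2)
    linarith
  rw [dist_eq_norm, E3_norm, Real.sq_sqrt (by positivity)]
  simp only [PiLp.sub_apply, rotZ_0, rotZ_1, rotZ_2, hs]
  linear_combination (x 0 ^ 2 + x 1 ^ 2) * Real.sin_sq_add_cos_sq α
    + (x 0 ^ 2 + x 1 ^ 2) * Real.sin_sq_add_cos_sq β

lemma sin_lb {a x : ℝ} (ha0 : 0 ≤ a) (ha : a ≤ π / 2) (h1 : a ≤ x) (h2 : x ≤ π - a) :
    Real.sin a ≤ Real.sin x := by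
  have hπ := Real.pi_pos
  rcases le_total x (π / 2) with h | h
  · exact Real.strictMonoOn_sin.monotoneOn ⟨by linarith, ha⟩ ⟨by linarith, h⟩ h1
  · rw [← Real.sin_pi_sub x]
    exact Real.strictMonoOn_sin.monotoneOn ⟨by linarith, ha⟩
      ⟨by linarith, by linarith⟩ (by linarith)

set_option maxHeartbeats 1000000 in
/-- For an axially symmetric nonnegative f of mass M concentrating mass δ in a ball
a + B_R with a = (a₁,a₂,z), the horizontal shift obeys |ā| sin(π/N) ≤ R,
where N = ⌊M/δ⌋ + 1. -/
theorem stmt10 (f : E3 × E3 → ℝ) (M δ R a1 a2 z : ℝ)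
    (hf : Integrable f) (hnn : ∀ w, 0 ≤ f w) (hsym : AxiSym f)
    (hmass : (∫ w : E3 × E3, f w) = M) (hδ : 0 < δ) (hR : 0 < R)
    (hconc : δ ≤ ∫ x in Metric.closedBall (e3 a1 a2 z) R, rho f x) :
    Real.sqrt (a1^2 + a2^2) *
        Real.sin (π / ((Nat.floor (M/δ) + 1 : ℕ) : ℝ)) ≤ R := by
  by_contra hcon
  push_neg at hcon
  set N : ℕ := Nat.floor (M / δ) + 1 with hNdef
  set r : ℝ := Real.sqrt (a1 ^ 2 + a2 ^ 2) with hrdef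
  set a : E3 := e3 a1 a2 z with hadef
  have hρnn : ∀ x, 0 ≤ rho f x := fun x => integral_nonneg fun v => hnn _
  have hρint : Integrable (rho f) := by
    have : Integrable (fun x : E3 => ∫ v : E3, f (x, v)) := hf.integral_prod_left
    exact this
  have hρtot : ∫ x, rho f x = M := by
    rw [← hmass]
    simp only [rho]
    exact (MeasureTheory.integral_prod f hf).symm
  have hδM : δ ≤ M := by
    calc δ ≤ ∫ x in Metric.closedBall a R, rho f x := hconc
    _ ≤ ∫ x, rho f x := setIntegral_le_integral hρint (ae_of_all _ hρnn)
    _ = M := hρtot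
  have hN2 : 2 ≤ N := by
    have h1 : (1 : ℝ) ≤ M / δ := (one_le_div hδ).2 hδM
    have h2 : 1 ≤ Nat.floor (M / δ) := Nat.le_floor (by exact_mod_cast h1)
    omega
  have hNR : (0:ℝ) < N := by
    have : 0 < N := by omega
    exact_mod_cast this
  have h2N : (2:ℝ) ≤ N := by exact_mod_cast hN2
  have hπ := Real.pi_pos
  have hπN : 0 < π / N := by positivity
  have hπN2 : π / N ≤ π / 2 := by
    rw [div_le_div_iff₀ hNR (by norm_num)]
    nlinarith
  have hsin0 : 0 < Real.sin (π / N) := Real.sin_pos_of_pos_of_lt_pi hπN (by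
    have : π / N ≤ π / 2 := hπN2
    linarith)
  have hr0 : 0 ≤ r := Real.sqrt_nonneg _
  have hrpos : 0 < r := by
    rcases lt_or_eq_of_le hr0 with h | h
    · exact h
    · exfalso; rw [← h] at hcon; simp at hcon; linarith
  have ha0 : a 0 = a1 := rfl
  have ha1 : a 1 = a2 := rfl
  have hrsq : a1 ^ 2 + a2 ^ 2 = r ^ 2 := (Real.sq_sqrt (by positivity)).symm
  have hmassk : ∀ θ : ℝ, δ ≤ ∫ x in Metric.closedBall (rotZ θ a) R, rho f x := by
    intro θ; rw [mass_rot hsym]; exact hconc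
  set t : ℕ → Set E3 := fun k => Metric.closedBall (rotZ (2 * π * k / N) a) R with htdef
  -- the key sine bound
  have key : ∀ j k : ℕ, k < j → j < N →
      Real.sin (π / N) ≤ Real.sin (π * ((j:ℝ) - k) / N) := by
    intro j k hkj hj
    have h1 : (k:ℝ) + 1 ≤ j := by exact_mod_cast hkj
    have h2 : (j:ℝ) + 1 ≤ N := by exact_mod_cast hj
    have hk0 : (0:ℝ) ≤ k := Nat.cast_nonneg k
    apply sin_lb hπN.le hπN2
    · rw [div_le_div_iff₀ hNR hNR]
      nlinarith [mul_le_mul_of_nonneg_right (mul_le_mul_of_nonneg_left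
        (show (1:ℝ) ≤ (j:ℝ) - (k:ℝ) by linarith) hπ.le) hNR.le]
    · have hrw : π - π / N = π * ((N:ℝ) - 1) / N := by field_simp
      rw [hrw, div_le_div_iff₀ hNR hNR]
      nlinarith [mul_le_mul_of_nonneg_right (mul_le_mul_of_nonneg_left
        (show (j:ℝ) - (k:ℝ) ≤ (N:ℝ) - 1 by linarith) hπ.le) hNR.le]
  have hdist' : ∀ j k : ℕ, k < j → j < N →
      R + R < dist (rotZ (2 * π * j / N) a) (rotZ (2 * π * k / N) a) := by
    intro j k hkj hj
    have hd2 := dist_rotZ_sq (2 * π * j / N) (2 * π * k / N) a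
    rw [ha0, ha1, hrsq,
      show (2 * π * j / N - 2 * π * k / N) / 2 = π * ((j:ℝ) - k) / N by ring] at hd2
    have hsb : Real.sin (π / N) ^ 2 ≤ Real.sin (π * ((j:ℝ) - k) / N) ^ 2 :=
      pow_le_pow_left₀ hsin0.le (key j k hkj hj) 2
    have hfin : (R + R) ^ 2 < dist (rotZ (2 * π * j / N) a) (rotZ (2 * π * k / N) a) ^ 2 := by
      rw [hd2]; nlinarith
    exact lt_of_pow_lt_pow_left₀ 2 dist_nonneg hfin
  have hdisj : Set.Pairwise ↑(Finset.range N) (Function.onFun Disjoint t) := by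
    intro j hj k hk hjk
    simp only [Finset.coe_range, Set.mem_Iio] at hj hk
    rcases hjk.lt_or_gt with h | h
    · exact Metric.closedBall_disjoint_closedBall (by rw [dist_comm]; exact hdist' k j h hk)
    · exact Metric.closedBall_disjoint_closedBall (hdist' j k h hj)
  have hsum : ∫ x in ⋃ k ∈ Finset.range N, t k, rho f x
      = ∑ k ∈ Finset.range N, ∫ x in t k, rho f x :=
    MeasureTheory.integral_biUnion_finset (Finset.range N)
      (fun i _ => measurableSet_closedBall) hdisj (fun i _ => hρint.integrableOn)
  have hle : ∑ k ∈ Finset.range N, ∫ x in t k, rho f x ≤ M := by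
    rw [← hsum, ← hρtot]
    exact setIntegral_le_integral hρint (ae_of_all _ hρnn)
  have hge : (N:ℝ) * δ ≤ ∑ k ∈ Finset.range N, ∫ x in t k, rho f x := by
    calc (N:ℝ) * δ = ∑ _k ∈ Finset.range N, δ := by
          rw [Finset.sum_const, Finset.card_range, nsmul_eq_mul]
    _ ≤ ∑ k ∈ Finset.range N, ∫ x in t k, rho f x :=
          Finset.sum_le_sum fun k _ => hmassk _
  have hlt : M < (N:ℝ) * δ := by
    have h := Nat.lt_floor_add_one (M / δ)
    have h' : M / δ < (N:ℝ) := by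
      rw [hNdef]; push_cast; exact_mod_cast h
    calc M = (M / δ) * δ := by field_simp
    _ < N * δ := by nlinarith
  linarith
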